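/- Let Σ = (a₁,…,a_k) be a finite alphabet and f : Σ → ℤ a function with f(a) ≥ −1 for all a ∈ Σ. Let n₁,…,n_k be natural numbers with n = n₁+⋯+n_k ≥ 1 such that Σ_{i=1}^{k} nᵢ·f(aᵢ) = −1. Then the number of f-Lukasiewicz words of length n containing exactly nᵢ occurrences of aᵢ for every i equals (n−1)!/(n₁!·n₂!·⋯·n_k!). -/

import Mathlib

open Finset
open Fin.NatCast

lemma sum_filter_lt_aux {n : ℕ} [NeZero n] (h : Fin n → ℤ) {m : ℕ} (hm : m ≤ n) :
    ∑ j ∈ Finset.univ.filter (fun j : Fin n => (j : ℕ) < m), h j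
      = ∑ t ∈ Finset.range m, h (t : Fin n) := by
  refine Finset.sum_nbij' (fun j => (j : ℕ)) (fun t => (t : Fin n)) ?_ ?_ ?_ ?_ ?_
  · intro j hj; simp at hj ⊢; exact hj
  · intro t ht
    simp only [Finset.mem_range] at ht
    simp [Fin.val_natCast, Nat.mod_eq_of_lt (lt_of_lt_of_le ht hm), ht]
  · intro j hj; exact Fin.cast_val_eq_self j
  · intro t ht
    simp only [Finset.mem_range] at ht
    simp [Fin.val_natCast, Nat.mod_eq_of_lt (lt_of_lt_of_le ht hm)]
  · intro j hj; rw [Fin.cast_val_eq_self]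

lemma luk_exists_unique {n : ℕ} (hn : 0 < n) (g : Fin n → ℤ)
    (hsum : ∑ j, g j = -1) :
    ∃! r : Fin n, ∀ m : ℕ, 1 ≤ m → m < n →
      0 ≤ ∑ j ∈ Finset.univ.filter (fun j : Fin n => (j : ℕ) < m), g (j + r) := by
  haveI : NeZero n := ⟨hn.ne'⟩
  classical
  -- partial sums
  set Sm : ℕ → ℤ := fun m => ∑ t ∈ Finset.range m, g (t : Fin n) with hSm
  have F1 : ∀ m : ℕ, Sm (m + 1) = Sm m + g (m : Fin n) := fun m => Finset.sum_range_succ _ m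
  have F2 : ∀ r m : ℕ, Sm (r + m) = Sm r + ∑ t ∈ Finset.range m, g ((r + t : ℕ) : Fin n) := by
    intro r m
    induction m with
    | zero => simp
    | succ m ih =>
        rw [← Nat.add_assoc, F1, ih, Finset.sum_range_succ]
        ring
  have F3 : ∀ r : ℕ, ∑ t ∈ Finset.range n, g ((r + t : ℕ) : Fin n) = -1 := by
    intro r
    have h1 : ∀ t : ℕ, ((r + t : ℕ) : Fin n) = (r : Fin n) + (t : Fin n) := by
      intro t; push_cast; ring
    calc ∑ t ∈ Finset.range n, g ((r + t : ℕ) : Fin n)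
        = ∑ t ∈ Finset.range n, g ((r : Fin n) + (t : Fin n)) := by
          exact Finset.sum_congr rfl fun t _ => by rw [h1]
      _ = ∑ i : Fin n, g ((r : Fin n) + i) := by
          rw [← Fin.sum_univ_eq_sum_range (fun t => g ((r : Fin n) + (t : Fin n))) n]
          exact Fintype.sum_congr _ _ fun i => by rw [Fin.cast_val_eq_self]
      _ = ∑ j, g j := Equiv.sum_comp (Equiv.addLeft (r : Fin n)) g
      _ = -1 := hsum
  have F4 : ∀ m : ℕ, Sm (m + n) = Sm m - 1 := by
    intro m; rw [F2 m n, F3]; ring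
  -- prefix sums of rotations
  have F5 : ∀ (r : Fin n) (m : ℕ), m ≤ n →
      ∑ j ∈ Finset.univ.filter (fun j : Fin n => (j : ℕ) < m), g (j + r)
        = Sm ((r : ℕ) + m) - Sm (r : ℕ) := by
    intro r m hm
    rw [sum_filter_lt_aux (fun j => g (j + r)) hm, F2]
    have : ∀ t : ℕ, ((t : Fin n) + r) = (((r : ℕ) + t : ℕ) : Fin n) := by
      intro t
      have : ((r : ℕ) : Fin n) = r := Fin.cast_val_eq_self r
      push_cast
      exact add_comm _ _
    rw [Finset.sum_congr rfl fun t _ => by rw [this t]]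
    ring
  -- the minimum
  obtain ⟨u0, hu0, hu0min⟩ := Finset.exists_min_image (Finset.range n) Sm ⟨0, Finset.mem_range.mpr hn⟩
  set A : Finset ℕ := (Finset.range n).filter (fun u => ∀ v ∈ Finset.range n, Sm u ≤ Sm v) with hA
  have hANe : A.Nonempty := ⟨u0, by simp only [hA, Finset.mem_filter]; exact ⟨hu0, hu0min⟩⟩
  set r0 : ℕ := A.min' hANe with hr0
  have hr0A : r0 ∈ A := Finset.min'_mem _ _
  have hr0n : r0 < n := Finset.mem_range.mp (Finset.mem_filter.mp hr0A).1
  have hr0min : ∀ v < n, Sm r0 ≤ Sm v := by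
    intro v hv; exact (Finset.mem_filter.mp hr0A).2 v (Finset.mem_range.mpr hv)
  have hr0strict : ∀ u < r0, Sm r0 < Sm u := by
    intro u hu
    by_contra hle
    push_neg at hle
    have huA : u ∈ A := by
      simp only [hA, Finset.mem_filter, Finset.mem_range]
      exact ⟨lt_trans hu hr0n, fun v hv => le_trans hle (hr0min v hv)⟩
    have := Finset.min'_le A u huA
    omega
  -- characterization: C r ↔ r = r0, for r < n
  have Cdef : ∀ r : ℕ, r < n →
      ((∀ m : ℕ, 1 ≤ m → m < n → Sm r ≤ Sm (r + m)) ↔ r = r0) := by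
    intro r hr
    constructor
    · intro hC
      have ha : ∀ u, r < u → u < n → Sm r ≤ Sm u := by
        intro u h1 h2
        have := hC (u - r) (by omega) (by omega)
        rwa [Nat.add_sub_cancel' (le_of_lt h1)] at this
      have hb : ∀ u < r, Sm r + 1 ≤ Sm u := by
        intro u hu
        have hm1 : 1 ≤ n + u - r := by omega
        have hm2 : n + u - r < n := by omega
        have := hC (n + u - r) hm1 hm2
        have heq : r + (n + u - r) = u + n := by omega
        rw [heq, F4] at this
        omega
      have hrA : r ∈ A := by
        simp only [hA, Finset.mem_filter, Finset.mem_range]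
        refine ⟨hr, fun v hv => ?_⟩
        rcases lt_trichotomy v r with h | h | h
        · have := hb v h; omega
        · subst h; omega
        · exact ha v h hv
      have h1 : r0 ≤ r := Finset.min'_le A r hrA
      rcases eq_or_lt_of_le h1 with h | h
      · omega
      · have h2 := hb r0 h
        have h3 := hr0min r hr
        omega
    · rintro rfl
      intro m hm1 hm2
      rcases lt_or_ge (r0 + m) n with h | h
      · exact hr0min _ h
      · have heq : r0 + m = (r0 + m - n) + n := by omega
        rw [heq, F4]
        have : r0 + m - n < r0 := by omega
        have := hr0strict _ this
        omega
  have hval : ((r0 : Fin n) : ℕ) = r0 := by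
    simp [Fin.val_natCast, Nat.mod_eq_of_lt hr0n]
  refine ⟨(r0 : Fin n), ?_, ?_⟩
  · intro m h1 h2
    rw [F5 _ m (le_of_lt h2), hval]
    have := (Cdef r0 hr0n).mpr rfl m h1 h2
    omega
  · intro r hr
    have hrn : (r : ℕ) < n := r.2
    have hreq : (r : ℕ) = r0 := by
      refine (Cdef (r : ℕ) hrn).mp ?_
      intro m h1 h2
      have := hr m h1 h2
      rw [F5 r m (le_of_lt h2)] at this
      omega
    exact Fin.ext (by rw [hval, hreq])

open Finset

noncomputable def fibP {α : Type*} (c : α → ℕ) (x : α) :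
    {p : Σ y : α, Fin (c y) // p.1 = x} ≃ Fin (c x) where
  toFun p := Fin.cast (congrArg c p.2) p.1.2
  invFun y := ⟨⟨x, y⟩, rfl⟩
  left_inv := by rintro ⟨⟨x', y⟩, h⟩; dsimp only at h; subst h; rfl
  right_inv y := rfl

noncomputable def wordEquiv {α : Type*} (c : α → ℕ) (n : ℕ)
    (w : Fin n → α) (e : ∀ x : α, {j : Fin n // w j = x} ≃ Fin (c x)) :
    Fin n ≃ Σ x : α, Fin (c x) where
  toFun j := ⟨w j, e (w j) ⟨j, rfl⟩⟩
  invFun p := ((e p.1).symm p.2).1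
  left_inv j := by simp
  right_inv := by
    rintro ⟨x, y⟩
    rcases hzq : (e x).symm y with ⟨j, hj⟩
    dsimp only
    rw [hzq]
    dsimp only
    subst hj
    have h2 : (⟨j, rfl⟩ : {j' : Fin n // w j' = w j}) = (e (w j)).symm y := by
      rw [hzq]
    have h3 : e (w j) ⟨j, rfl⟩ = y := by rw [h2, Equiv.apply_symm_apply]
    exact congrArg (Sigma.mk (w j)) h3

lemma card_words_mul {α : Type*} [Fintype α] (c : α → ℕ) (n : ℕ) (hn : n = ∑ x, c x) :
    Nat.card {w : Fin n → α // ∀ x, Nat.card {j : Fin n // w j = x} = c x}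
      * ∏ x, (c x).factorial = n.factorial := by
  classical
  set S := {w : Fin n → α // ∀ x, Nat.card {j : Fin n // w j = x} = c x} with hS
  have hbij : Function.Bijective
      (fun t : (Σ w : S, ∀ x : α, ({j : Fin n // w.1 j = x} ≃ Fin (c x))) =>
        wordEquiv c n t.1.1 t.2) := by
    constructor
    · rintro ⟨⟨w, hw⟩, e⟩ ⟨⟨w', hw'⟩, e'⟩ h
      have hpt : ∀ j, (⟨w j, e (w j) ⟨j, rfl⟩⟩ : Σ x, Fin (c x))
          = ⟨w' j, e' (w' j) ⟨j, rfl⟩⟩ := fun j => DFunLike.congr_fun h j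
      have hww : w = w' := funext fun j => congrArg Sigma.fst (hpt j)
      subst hww
      have hee : e = e' := by
        funext x
        apply Equiv.ext
        rintro ⟨j, hj⟩
        subst hj
        have h2 := hpt j
        exact eq_of_heq (Sigma.mk.inj_iff.mp h2).2
      subst hee
      rfl
    · intro E
      set e0 : ∀ x : α, {j : Fin n // (fun j => (E j).1) j = x} ≃ Fin (c x) :=
        fun x => (E.subtypeEquiv fun j => Iff.rfl).trans (fibP c x) with he0
      refine ⟨⟨⟨fun j => (E j).1, fun x => by
        rw [Nat.card_congr (e0 x)]; simp⟩, e0⟩, ?_⟩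
      apply Equiv.ext
      intro j
      show (⟨(E j).1, e0 ((E j).1) ⟨j, rfl⟩⟩ : Σ x, Fin (c x)) = E j
      conv_rhs => rw [← Sigma.eta (E j)]
      refine congrArg (Sigma.mk _) (Fin.ext ?_)
      simp [he0, fibP, Equiv.subtypeEquiv]
  have h1 : Nat.card (Σ w : S, ∀ x : α, ({j : Fin n // w.1 j = x} ≃ Fin (c x)))
      = Nat.card (Fin n ≃ Σ x : α, Fin (c x)) :=
    Nat.card_congr (Equiv.ofBijective _ hbij)
  have hcardP : Fintype.card (Σ x : α, Fin (c x)) = n := by simp [hn]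
  have h2 : Nat.card (Fin n ≃ Σ x : α, Fin (c x)) = n.factorial := by
    rw [Nat.card_eq_fintype_card,
      Fintype.card_equiv (Fintype.equivOfCardEq (by simp [hcardP]))]
    simp
  have h3 : Nat.card (Σ w : S, ∀ x : α, ({j : Fin n // w.1 j = x} ≃ Fin (c x)))
      = Nat.card S * ∏ x, (c x).factorial := by
    rw [Nat.card_eq_fintype_card, Fintype.card_sigma]
    have key : ∀ w : S, Fintype.card (∀ x : α, ({j : Fin n // w.1 j = x} ≃ Fin (c x)))
        = ∏ x, (c x).factorial := by
      intro w
      rw [Fintype.card_pi]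
      refine Finset.prod_congr rfl fun x _ => ?_
      have hfc : Fintype.card {j : Fin n // w.1 j = x} = c x := by
        rw [← Nat.card_eq_fintype_card]; exact w.2 x
      rw [Fintype.card_equiv (Fintype.equivFinOfCardEq hfc), hfc]
    rw [Finset.sum_congr rfl fun w _ => key w, Finset.sum_const, Finset.card_univ,
      smul_eq_mul, Nat.card_eq_fintype_card]
  rw [← h3, h1, h2]

lemma sum_f_of_counts {α : Type*} [Fintype α] {n : ℕ} (f : α → ℤ) (w : Fin n → α) (c : α → ℕ)
    (hw : ∀ x, Nat.card {j : Fin n // w j = x} = c x) :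
    ∑ j, f (w j) = ∑ x, (c x : ℤ) * f x := by
  classical
  rw [← Finset.sum_fiberwise' Finset.univ w f]
  refine Finset.sum_congr rfl fun x _ => ?_
  rw [Finset.sum_const, ← Fintype.card_subtype, ← Nat.card_eq_fintype_card, hw,
    nsmul_eq_mul]
/-- Let `α` be a finite alphabet with letters `a 1, …, a k` and `f : α → ℤ`
with `f ≥ -1`.  Let `cnt i` be natural numbers with `n = cnt 1 + ⋯ + cnt k ≥ 1` and
`∑ i, cnt i * f (a i) = -1`.  Then the number of `f`-Lukasiewicz words of length `n`
(words `w` with `∑_{j<m} f(w j) ≥ 0` for `1 ≤ m < n` and total sum `-1`) containing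
exactly `cnt i` occurrences of `a i` for every `i` equals `(n-1)! / ((cnt 1)! ⋯ (cnt k)!)`. -/
theorem number_of_lukasiewicz_words_with_given_occurrences
    {α : Type*} [Fintype α] (k : ℕ) (a : Fin k → α) (ha : Function.Bijective a)
    (f : α → ℤ) (hf : ∀ x : α, -1 ≤ f x)
    (cnt : Fin k → ℕ) (n : ℕ) (hn : n = ∑ i, cnt i) (hn1 : 1 ≤ n)
    (hvalid : ∑ i, (cnt i : ℤ) * f (a i) = -1) :
    Nat.card {w : Fin n → α //
        (∀ i : Fin k, Nat.card {j : Fin n // w j = a i} = cnt i) ∧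
        (∑ j : Fin n, f (w j) = -1) ∧
        (∀ m : ℕ, 1 ≤ m → m < n →
          0 ≤ ∑ j ∈ Finset.univ.filter (fun j : Fin n => (j : ℕ) < m), f (w j))} =
      (n - 1).factorial / ∏ i, (cnt i).factorial := by
  classical
  have hnpos : 0 < n := hn1
  haveI : NeZero n := ⟨hnpos.ne'⟩
  set e_a := Equiv.ofBijective a ha with hea
  set c : α → ℕ := fun x => cnt (e_a.symm x) with hc
  have hax : ∀ i, e_a i = a i := fun i => rfl
  have hca : ∀ i, c (a i) = cnt i := by
    intro i
    show cnt (e_a.symm (e_a i)) = cnt i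
    rw [Equiv.symm_apply_apply]
  have hcnt_c : ∀ w : Fin n → α,
      (∀ i, Nat.card {j : Fin n // w j = a i} = cnt i) ↔
      (∀ x, Nat.card {j : Fin n // w j = x} = c x) := by
    intro w
    constructor
    · intro h x
      have h2 := h (e_a.symm x)
      rwa [show a (e_a.symm x) = x from e_a.apply_symm_apply x] at h2
    · intro h i
      rw [h (a i), hca]
  have hsum_c : ∑ x, c x = n := by
    calc ∑ x, c x = ∑ i, c (e_a i) := (Equiv.sum_comp e_a c).symm
      _ = ∑ i, cnt i := Fintype.sum_congr _ _ fun i => by rw [hax, hca]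
      _ = n := hn.symm
  have hprod_c : ∏ x, (c x).factorial = ∏ i, (cnt i).factorial := by
    calc ∏ x, (c x).factorial = ∏ i, (c (e_a i)).factorial := (Equiv.prod_comp e_a _).symm
      _ = _ := Fintype.prod_congr _ _ fun i => by rw [hax, hca]
  have hsumf : ∀ w : Fin n → α, (∀ x, Nat.card {j : Fin n // w j = x} = c x) →
      ∑ j, f (w j) = -1 := by
    intro w hw
    rw [sum_f_of_counts f w c hw]
    calc ∑ x, (c x : ℤ) * f x = ∑ i, (c (e_a i) : ℤ) * f (e_a i) :=
          (Equiv.sum_comp e_a (fun x => (c x : ℤ) * f x)).symm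
      _ = ∑ i, (cnt i : ℤ) * f (a i) := Fintype.sum_congr _ _ fun i => by rw [hax, hca]
      _ = -1 := hvalid
  set L := {w : Fin n → α //
        (∀ i : Fin k, Nat.card {j : Fin n // w j = a i} = cnt i) ∧
        (∑ j : Fin n, f (w j) = -1) ∧
        (∀ m : ℕ, 1 ≤ m → m < n →
          0 ≤ ∑ j ∈ Finset.univ.filter (fun j : Fin n => (j : ℕ) < m), f (w j))} with hL
  set S := {w : Fin n → α // ∀ x, Nat.card {j : Fin n // w j = x} = c x} with hSdef
  have hsub : ∀ (v : Fin n → α) (r : Fin n),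
      (∀ i, Nat.card {j : Fin n // v j = a i} = cnt i) →
      (∀ x, Nat.card {j : Fin n // v (j - r) = x} = c x) := by
    intro v r hv1 x
    exact (Nat.card_congr ((Equiv.subRight r).subtypeEquiv
      (p := fun j : Fin n => v (j - r) = x) (q := fun j : Fin n => v j = x)
      (fun j => Iff.rfl))).trans ((hcnt_c v).mp hv1 x)
  set Φ : L × Fin n → S := fun p =>
    ⟨fun j => p.1.1 (j - p.2), hsub p.1.1 p.2 p.1.2.1⟩ with hΦ
  have hΦbij : Function.Bijective Φ := by
    constructor
    · rintro ⟨⟨v, hv1, hv2, hv3⟩, r⟩ ⟨⟨v', hv1', hv2', hv3'⟩, r'⟩ hpq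
      have hwj : ∀ j : Fin n, v (j - r) = v' (j - r') :=
        fun j => congrFun (congrArg Subtype.val hpq) j
      obtain ⟨r0, hr0, hr0uniq⟩ :=
        luk_exists_unique hnpos (fun j => f (v (j - r))) (hsumf _ (hsub v r hv1))
      have hrr : r = r0 := by
        refine hr0uniq r ?_
        intro m h1 h2
        have heq : ∑ j ∈ Finset.univ.filter (fun j : Fin n => (j : ℕ) < m), f (v (j + r - r))
            = ∑ j ∈ Finset.univ.filter (fun j : Fin n => (j : ℕ) < m), f (v j) :=
          Finset.sum_congr rfl fun j _ => by rw [add_sub_cancel_right]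
        exact le_of_le_of_eq (hv3 m h1 h2) heq.symm
      have hrr' : r' = r0 := by
        refine hr0uniq r' ?_
        intro m h1 h2
        have heq : ∑ j ∈ Finset.univ.filter (fun j : Fin n => (j : ℕ) < m), f (v (j + r' - r))
            = ∑ j ∈ Finset.univ.filter (fun j : Fin n => (j : ℕ) < m), f (v' j) :=
          Finset.sum_congr rfl fun j _ => by rw [hwj (j + r'), add_sub_cancel_right]
        exact le_of_le_of_eq (hv3' m h1 h2) heq.symm
      have hreq : r = r' := by rw [hrr, hrr']
      subst hreq
      have hvv : v = v' := funext fun j => by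
        have h3 := hwj (j + r)
        rwa [add_sub_cancel_right] at h3
      subst hvv
      rfl
    · rintro ⟨w, hw⟩
      obtain ⟨r, hr, -⟩ := luk_exists_unique hnpos (fun j => f (w j)) (hsumf w hw)
      have hv1 : ∀ i, Nat.card {j : Fin n // w (j + r) = a i} = cnt i := by
        refine (hcnt_c _).mpr fun x => ?_
        exact (Nat.card_congr ((Equiv.addRight r).subtypeEquiv
          (p := fun j : Fin n => w (j + r) = x) (q := fun j : Fin n => w j = x)
          (fun j => Iff.rfl))).trans (hw x)
      have hv2 : ∑ j, f (w (j + r)) = -1 :=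
        (Equiv.sum_comp (Equiv.addRight r) (fun j => f (w j))).trans (hsumf w hw)
      refine ⟨⟨⟨fun j => w (j + r), hv1, hv2, hr⟩, r⟩, ?_⟩
      apply Subtype.ext
      funext j
      show w (j - r + r) = w j
      rw [sub_add_cancel]
  have hcardLS : Nat.card S = Nat.card L * n := by
    rw [← Nat.card_congr (Equiv.ofBijective Φ hΦbij), Nat.card_prod]
    simp
  have hA := card_words_mul c n hsum_c.symm
  rw [hcardLS, hprod_c] at hA
  have hfact : n.factorial = n * (n - 1).factorial := (Nat.mul_factorial_pred hnpos.ne').symm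
  rw [hfact] at hA
  have hP : 0 < ∏ i, (cnt i).factorial :=
    Finset.prod_pos fun i _ => Nat.factorial_pos _
  have hkey : Nat.card L * ∏ i, (cnt i).factorial = (n - 1).factorial := by
    refine Nat.eq_of_mul_eq_mul_right hnpos ?_
    calc Nat.card L * (∏ i, (cnt i).factorial) * n
        = Nat.card L * n * ∏ i, (cnt i).factorial := by ring
      _ = n * (n - 1).factorial := hA
      _ = (n - 1).factorial * n := by ring
  rw [← hkey]
  exact (Nat.mul_div_cancel (Nat.card L) hP).symm
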